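/- (Corollary 2: emergence of the Lorentz field along a root geodesic.) Let n = 4 and let g = g^R + i·g^I be a pointwise-hermitian, positive-definite C¹ metric on ℂ⁴ with ∂^x_1 g_{αβ̄} ≡ 0 and ∂^t_γ g_{αβ̄} ≡ 0 for γ ∈ {2,3,4} and all α, β. Let z = x + it : ℝ → ℂ⁴ be a C² curve with L(σ) > 0 satisfying the complex geodesic equation, and suppose that along the curve: g^I(z(σ)) = 0 for every σ (equivalently the link tensor ε vanishes along the curve, while derivatives of g^I may be nonzero), Dt¹ = 1, Dt^γ = 0 for γ ∈ {2,3,4}, and Dx¹ = 0. Then for every γ ∈ {2,3,4} and every σ: Σ_μ g^R_{μγ̄}(z) D²x^μ = [Σ_{α,β} Φ^{γ++}_{αβ} Dx^α Dx^β − Σ_β ∂^t_1 g^R_{βγ̄} Dx^β + ½·∂^x_γ g^R_{11̄}] + [− Σ_β F^x_{1γβ} Dx^β − Φ^{γ--}_{11}], all coefficient functions evaluated at z(σ); the first bracket is the gravitational contribution and the second bracket is the Lorentz field contribution with magnetic tensor F^x and electric part Φ^{γ--}_{11}. -/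

import Mathlib

open Complex
open scoped ComplexOrder

noncomputable section

/-- The `α`-th standard basis vector of `ℂⁿ`. -/
def eV (n : ℕ) (α : Fin n) : Fin n → ℂ := fun i => if i = α then 1 else 0

/-- `∂^x_α`: partial derivative of `f : ℂⁿ → ℂ` at `z` in the real direction `x^α`. -/
def dX {n : ℕ} (α : Fin n) (f : (Fin n → ℂ) → ℂ) (z : Fin n → ℂ) : ℂ :=
  deriv (fun s : ℝ => f (fun i => z i + (s : ℂ) * eV n α i)) 0

/-- `∂^t_α`: partial derivative of `f : ℂⁿ → ℂ` at `z` in the imaginary direction `t^α`. -/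
def dT {n : ℕ} (α : Fin n) (f : (Fin n → ℂ) → ℂ) (z : Fin n → ℂ) : ℂ :=
  deriv (fun s : ℝ => f (fun i => z i + (s : ℂ) * Complex.I * eV n α i)) 0

/-- Wirtinger derivative `∂_α = ½(∂^x_α − i ∂^t_α)`. -/
def dW {n : ℕ} (α : Fin n) (f : (Fin n → ℂ) → ℂ) (z : Fin n → ℂ) : ℂ :=
  (dX α f z - Complex.I * dT α f z) / 2

/-- Conjugate Wirtinger derivative `∂_ᾱ = ½(∂^x_α + i ∂^t_α)`. -/
def dWbar {n : ℕ} (α : Fin n) (f : (Fin n → ℂ) → ℂ) (z : Fin n → ℂ) : ℂ :=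
  (dX α f z + Complex.I * dT α f z) / 2

/-- The `(i,j)` entry of the metric, as a `ℂ`-valued function `g_{i j̄}`. -/
def gF {n : ℕ} (g : (Fin n → ℂ) → Matrix (Fin n) (Fin n) ℂ) (i j : Fin n) :
    (Fin n → ℂ) → ℂ := fun z => g z i j

/-- The real part `g^R_{i j̄}` of the metric entry, coerced into `ℂ`. -/
def gR {n : ℕ} (g : (Fin n → ℂ) → Matrix (Fin n) (Fin n) ℂ) (i j : Fin n) :
    (Fin n → ℂ) → ℂ := fun z => ((g z i j).re : ℂ)

/-- The imaginary part `g^I_{i j̄}` of the metric entry, coerced into `ℂ`. -/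
def gI {n : ℕ} (g : (Fin n → ℂ) → Matrix (Fin n) (Fin n) ℂ) (i j : Fin n) :
    (Fin n → ℂ) → ℂ := fun z => ((g z i j).im : ℂ)

/-- `g` is pointwise hermitian: `g_{αβ̄} = conj (g_{βᾱ})`. -/
def IsHermitianMetric {n : ℕ} (g : (Fin n → ℂ) → Matrix (Fin n) (Fin n) ℂ) : Prop :=
  ∀ z i j, g z i j = (starRingEnd ℂ) (g z j i)

/-- `g` is continuously differentiable (entrywise, as a map over `ℝ`). -/
def MetricC1 {n : ℕ} (g : (Fin n → ℂ) → Matrix (Fin n) (Fin n) ℂ) : Prop :=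
  ∀ i j, ContDiff ℝ 1 (gF g i j)

/-- Primary field `Φ^{γ++}_{αβ}`. -/
def PhiPP {n : ℕ} (g : (Fin n → ℂ) → Matrix (Fin n) (Fin n) ℂ) (γ α β : Fin n)
    (z : Fin n → ℂ) : ℂ :=
  (dX γ (gR g α β) z - dX α (gR g β γ) z - dX β (gR g α γ) z) / 2

/-- Primary field `Φ^{γ+-}_{αβ}`. -/
def PhiPM {n : ℕ} (g : (Fin n → ℂ) → Matrix (Fin n) (Fin n) ℂ) (γ α β : Fin n)
    (z : Fin n → ℂ) : ℂ :=
  (dX γ (gI g α β) z - dX α (gI g β γ) z - dX β (gI g α γ) z) / 2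

/-- Primary field `Φ^{γ-+}_{αβ}`. -/
def PhiMP {n : ℕ} (g : (Fin n → ℂ) → Matrix (Fin n) (Fin n) ℂ) (γ α β : Fin n)
    (z : Fin n → ℂ) : ℂ :=
  (dT γ (gR g α β) z - dT α (gR g β γ) z - dT β (gR g α γ) z) / 2

/-- Primary field `Φ^{γ--}_{αβ}`. -/
def PhiMM {n : ℕ} (g : (Fin n → ℂ) → Matrix (Fin n) (Fin n) ℂ) (γ α β : Fin n)
    (z : Fin n → ℂ) : ℂ :=
  (dT γ (gI g α β) z - dT α (gI g β γ) z - dT β (gI g α γ) z) / 2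

/-- Secondary field `F^x_{αγβ}`. -/
def Fx {n : ℕ} (g : (Fin n → ℂ) → Matrix (Fin n) (Fin n) ℂ) (α γ β : Fin n)
    (z : Fin n → ℂ) : ℂ :=
  dX γ (gI g α β) z - dX β (gI g α γ) z

/-- Secondary field `F^t_{αγβ}`. -/
def Ft {n : ℕ} (g : (Fin n → ℂ) → Matrix (Fin n) (Fin n) ℂ) (α γ β : Fin n)
    (z : Fin n → ℂ) : ℂ :=
  dT γ (gI g α β) z - dT β (gI g α γ) z

/-- The Lagrangian `L(z,v) = sqrt(Re Σ g_{αβ̄}(z) v^α conj(v^β))`. -/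
def Lag {n : ℕ} (g : (Fin n → ℂ) → Matrix (Fin n) (Fin n) ℂ) (z v : Fin n → ℂ) : ℝ :=
  Real.sqrt (∑ α, ∑ β, g z α β * v α * (starRingEnd ℂ) (v β)).re

/-- Wirtinger derivative with respect to `conj(v^γ)` of a real-valued function on `ℂⁿ`:
`½(∂/∂(Re v^γ) + i·∂/∂(Im v^γ))`. -/
def dWbarR {n : ℕ} (γ : Fin n) (f : (Fin n → ℂ) → ℝ) (v : Fin n → ℂ) : ℂ :=
  ((deriv (fun s : ℝ => f (fun i => v i + (s : ℂ) * eV n γ i)) 0 : ℝ) +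
    Complex.I *
      (deriv (fun s : ℝ => f (fun i => v i + (s : ℂ) * Complex.I * eV n γ i)) 0 : ℝ)) / 2

/-- The Lagrangian speed `L(σ)` of a curve `z : ℝ → ℂⁿ`. -/
def curveL {n : ℕ} (g : (Fin n → ℂ) → Matrix (Fin n) (Fin n) ℂ) (z : ℝ → Fin n → ℂ)
    (σ : ℝ) : ℝ :=
  Lag g (z σ) (fun α => deriv (fun τ => z τ α) σ)

/-- `Dz^α = (1/L)·dz^α/dσ`. -/
def Dz {n : ℕ} (g : (Fin n → ℂ) → Matrix (Fin n) (Fin n) ℂ) (z : ℝ → Fin n → ℂ)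
    (α : Fin n) (σ : ℝ) : ℂ :=
  (curveL g z σ : ℂ)⁻¹ * deriv (fun τ => z τ α) σ

/-- `D²z^α = (1/L)·d/dσ((1/L)·dz^α/dσ)`. -/
def D2z {n : ℕ} (g : (Fin n → ℂ) → Matrix (Fin n) (Fin n) ℂ) (z : ℝ → Fin n → ℂ)
    (α : Fin n) (σ : ℝ) : ℂ :=
  (curveL g z σ : ℂ)⁻¹ *
    deriv (fun τ => (curveL g z τ : ℂ)⁻¹ * deriv (fun s => z s α) τ) σ

/-- `Dx^α = (1/L)·dx^α/dσ`. -/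
def Dx {n : ℕ} (g : (Fin n → ℂ) → Matrix (Fin n) (Fin n) ℂ) (z : ℝ → Fin n → ℂ)
    (α : Fin n) (σ : ℝ) : ℝ :=
  (curveL g z σ)⁻¹ * deriv (fun τ => (z τ α).re) σ

/-- `Dt^α = (1/L)·dt^α/dσ`. -/
def Dt {n : ℕ} (g : (Fin n → ℂ) → Matrix (Fin n) (Fin n) ℂ) (z : ℝ → Fin n → ℂ)
    (α : Fin n) (σ : ℝ) : ℝ :=
  (curveL g z σ)⁻¹ * deriv (fun τ => (z τ α).im) σ

/-- `D²x^α = (1/L)·d/dσ((1/L)·dx^α/dσ)`. -/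
def D2x {n : ℕ} (g : (Fin n → ℂ) → Matrix (Fin n) (Fin n) ℂ) (z : ℝ → Fin n → ℂ)
    (α : Fin n) (σ : ℝ) : ℝ :=
  (curveL g z σ)⁻¹ *
    deriv (fun τ => (curveL g z τ)⁻¹ * deriv (fun s => (z s α).re) τ) σ

/-- `D²t^α = (1/L)·d/dσ((1/L)·dt^α/dσ)`. -/
def D2t {n : ℕ} (g : (Fin n → ℂ) → Matrix (Fin n) (Fin n) ℂ) (z : ℝ → Fin n → ℂ)
    (α : Fin n) (σ : ℝ) : ℝ :=
  (curveL g z σ)⁻¹ *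
    deriv (fun τ => (curveL g z τ)⁻¹ * deriv (fun s => (z s α).im) τ) σ

/-- The complex geodesic equation (Theorem 1's equation) for the curve `z`. -/
def GeodesicEq {n : ℕ} (g : (Fin n → ℂ) → Matrix (Fin n) (Fin n) ℂ)
    (z : ℝ → Fin n → ℂ) : Prop :=
  ∀ (γ : Fin n) (σ : ℝ),
    ∑ μ, g (z σ) μ γ * D2z g z μ σ =
      (∑ α, ∑ β, (dWbar γ (gF g α β) (z σ) - dWbar β (gF g α γ) (z σ)) *
          Dz g z α σ * (starRingEnd ℂ) (Dz g z β σ)) -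
        ∑ α, ∑ β, dW α (gF g β γ) (z σ) * Dz g z α σ * Dz g z β σ

/-- The real part of the metric as a real matrix. -/
def gRmat {n : ℕ} (g : (Fin n → ℂ) → Matrix (Fin n) (Fin n) ℂ) (z : Fin n → ℂ) :
    Matrix (Fin n) (Fin n) ℝ :=
  Matrix.of fun i j => (g z i j).re

/-- The link tensor `ε^η_γ = Σ_ν g^I_{νγ̄} ((g^R)⁻¹)_{νη}`. -/
def eps {n : ℕ} (g : (Fin n → ℂ) → Matrix (Fin n) (Fin n) ℂ) (z : Fin n → ℂ)
    (η γ : Fin n) : ℝ :=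
  ∑ ν, (g z ν γ).im * (gRmat g z)⁻¹ ν η


section Helpers

lemma deriv_ofReal_re {F : ℝ → ℂ} {x : ℝ} (hF : DifferentiableAt ℝ F x) :
    deriv (fun s => (((F s).re : ℝ) : ℂ)) x = (((deriv F x).re : ℝ) : ℂ) := by
  have h2 : HasDerivAt (fun s => (F s).re) (deriv F x).re x :=
    Complex.reCLM.hasFDerivAt.comp_hasDerivAt x hF.hasDerivAt
  exact h2.ofReal_comp.deriv

lemma deriv_ofReal_im {F : ℝ → ℂ} {x : ℝ} (hF : DifferentiableAt ℝ F x) :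
    deriv (fun s => (((F s).im : ℝ) : ℂ)) x = (((deriv F x).im : ℝ) : ℂ) := by
  have h2 : HasDerivAt (fun s => (F s).im) (deriv F x).im x :=
    Complex.imCLM.hasFDerivAt.comp_hasDerivAt x hF.hasDerivAt
  exact h2.ofReal_comp.deriv

lemma diff_path {n : ℕ} (w c : Fin n → ℂ) :
    Differentiable ℝ (fun s : ℝ => fun i => w i + (s : ℂ) * c i) := by
  apply differentiable_pi.2
  intro i
  exact (Complex.ofRealCLM.differentiable.mul_const (c i)).const_add (w i)

lemma diff_pathX {n : ℕ} {f : (Fin n → ℂ) → ℂ} (hf : ContDiff ℝ 1 f) (α : Fin n)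
    (w : Fin n → ℂ) :
    DifferentiableAt ℝ (fun s : ℝ => f (fun i => w i + (s : ℂ) * eV n α i)) 0 :=
  ((hf.differentiable one_ne_zero) _).comp (0:ℝ) (diff_path w (eV n α) 0)

lemma diff_pathT {n : ℕ} {f : (Fin n → ℂ) → ℂ} (hf : ContDiff ℝ 1 f) (α : Fin n)
    (w : Fin n → ℂ) :
    DifferentiableAt ℝ (fun s : ℝ => f (fun i => w i + (s : ℂ) * Complex.I * eV n α i)) 0 := by
  have := ((hf.differentiable one_ne_zero) _).comp (0:ℝ) (diff_path w (fun i => Complex.I * eV n α i) 0)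
  simpa only [mul_assoc, Function.comp_def] using this

lemma dX_gR {n : ℕ} {g : (Fin n → ℂ) → Matrix (Fin n) (Fin n) ℂ} (hg : MetricC1 g)
    (α i j : Fin n) (w : Fin n → ℂ) :
    dX α (gR g i j) w = (((dX α (gF g i j) w).re : ℝ) : ℂ) :=
  deriv_ofReal_re (diff_pathX (hg i j) α w)

lemma dX_gI {n : ℕ} {g : (Fin n → ℂ) → Matrix (Fin n) (Fin n) ℂ} (hg : MetricC1 g)
    (α i j : Fin n) (w : Fin n → ℂ) :
    dX α (gI g i j) w = (((dX α (gF g i j) w).im : ℝ) : ℂ) :=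
  deriv_ofReal_im (diff_pathX (hg i j) α w)

lemma dT_gR {n : ℕ} {g : (Fin n → ℂ) → Matrix (Fin n) (Fin n) ℂ} (hg : MetricC1 g)
    (α i j : Fin n) (w : Fin n → ℂ) :
    dT α (gR g i j) w = (((dT α (gF g i j) w).re : ℝ) : ℂ) :=
  deriv_ofReal_re (diff_pathT (hg i j) α w)

lemma dT_gI {n : ℕ} {g : (Fin n → ℂ) → Matrix (Fin n) (Fin n) ℂ} (hg : MetricC1 g)
    (α i j : Fin n) (w : Fin n → ℂ) :
    dT α (gI g i j) w = (((dT α (gF g i j) w).im : ℝ) : ℂ) :=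
  deriv_ofReal_im (diff_pathT (hg i j) α w)

-- antisymmetry of imaginary part of derivatives, from hermiticity
lemma dX_gI_antisymm {n : ℕ} {g : (Fin n → ℂ) → Matrix (Fin n) (Fin n) ℂ}
    (hherm : IsHermitianMetric g) (α i j : Fin n) (w : Fin n → ℂ) :
    dX α (gI g i j) w = - dX α (gI g j i) w := by
  have hfun : gI g i j = fun z => -(gI g j i z) := by
    funext zz
    simp only [gI, hherm zz i j, Complex.conj_im, Complex.ofReal_neg]
  rw [hfun]
  unfold dX
  rw [← deriv.fun_neg]

end Helpers

section Helpers2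

lemma gR_symm {n : ℕ} {g : (Fin n → ℂ) → Matrix (Fin n) (Fin n) ℂ}
    (hherm : IsHermitianMetric g) (i j : Fin n) : gR g i j = gR g j i := by
  funext zz
  simp only [gR, hherm zz i j, Complex.conj_re]

lemma dX_conj {n : ℕ} {g : (Fin n → ℂ) → Matrix (Fin n) (Fin n) ℂ} (hg : MetricC1 g)
    (hherm : IsHermitianMetric g) (α i j : Fin n) (w : Fin n → ℂ) :
    dX α (gF g i j) w = (starRingEnd ℂ) (dX α (gF g j i) w) := by
  have hr : (dX α (gF g i j) w).re = (dX α (gF g j i) w).re := by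
    have h1 := (dX_gR hg α i j w).symm
    rw [gR_symm hherm i j, dX_gR hg α j i w] at h1
    exact_mod_cast h1
  have hi : (dX α (gF g i j) w).im = -(dX α (gF g j i) w).im := by
    have h1 := (dX_gI hg α i j w).symm
    rw [dX_gI_antisymm hherm α i j w, dX_gI hg α j i w] at h1
    have : ((dX α (gF g i j) w).im : ℂ) = (-((dX α (gF g j i) w).im) : ℝ) := by
      push_cast; exact h1
    exact_mod_cast this
  apply Complex.ext
  · simpa using hr
  · simpa using hi

end Helpers2
/-- Corollary 2: the Lorentz field along a root geodesic. Indices `1,2,3,4` are rendered as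
`0,1,2,3 : Fin 4`, so the distinguished index `1` is `0`. Along a complex geodesic with
`g^I = 0` on the curve (so the link tensor vanishes there), `Dt¹ = 1`, `Dt² = Dt³ = Dt⁴ = 0`
and `Dx¹ = 0`, the projective geodesic acquires, besides the gravitational part, the Lorentz
field contribution `− Σ_β F^x_{1γβ} Dx^β − Φ^{γ--}_{11}`. -/
theorem lorentz_field_emergence
    (g : (Fin 4 → ℂ) → Matrix (Fin 4) (Fin 4) ℂ)
    (hg : MetricC1 g) (hherm : IsHermitianMetric g)
    (hpos : ∀ w, (g w).PosDef)
    (hx1 : ∀ (α β : Fin 4) (w : Fin 4 → ℂ), dX (0 : Fin 4) (gF g α β) w = 0)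
    (ht : ∀ γ : Fin 4, γ ≠ 0 → ∀ (α β : Fin 4) (w : Fin 4 → ℂ), dT γ (gF g α β) w = 0)
    (z : ℝ → Fin 4 → ℂ) (hz : ContDiff ℝ 2 z)
    (hL : ∀ σ, 0 < curveL g z σ) (hgeo : GeodesicEq g z)
    (hGI : ∀ (σ : ℝ) (i j : Fin 4), (g (z σ) i j).im = 0)
    (hDt1 : ∀ σ, Dt g z (0 : Fin 4) σ = 1)
    (hDt : ∀ γ : Fin 4, γ ≠ 0 → ∀ σ, Dt g z γ σ = 0)
    (hDx1 : ∀ σ, Dx g z (0 : Fin 4) σ = 0)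
    (γ : Fin 4) (hγ : γ ≠ 0) (σ : ℝ) :
    ∑ μ, gR g μ γ (z σ) * (D2x g z μ σ : ℂ) =
      ((∑ α, ∑ β, PhiPP g γ α β (z σ) * (Dx g z α σ : ℂ) * (Dx g z β σ : ℂ)) -
          (∑ β, dT (0 : Fin 4) (gR g β γ) (z σ) * (Dx g z β σ : ℂ)) +
          dX γ (gR g (0 : Fin 4) (0 : Fin 4)) (z σ) / 2) +
        ((- ∑ β, Fx g (0 : Fin 4) γ β (z σ) * (Dx g z β σ : ℂ)) -
          PhiMM g γ (0 : Fin 4) (0 : Fin 4) (z σ)) := by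
  classical
  -- coordinate smoothness
  have hz2 : ∀ μ : Fin 4, ContDiff ℝ 2 (fun τ => z τ μ) := fun μ =>
    (ContinuousLinearMap.proj μ : (Fin 4 → ℂ) →L[ℝ] ℂ).contDiff.comp hz
  have hzd : ∀ (μ : Fin 4) (τ : ℝ), DifferentiableAt ℝ (fun s => z s μ) τ := fun μ τ =>
    ((hz2 μ).differentiable (by norm_num)).differentiableAt
  have hre2 : ∀ μ : Fin 4, ContDiff ℝ 2 (fun τ => (z τ μ).re) := fun μ =>
    Complex.reCLM.contDiff.comp (hz2 μ)
  have him2 : ∀ μ : Fin 4, ContDiff ℝ 2 (fun τ => (z τ μ).im) := fun μ =>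
    Complex.imCLM.contDiff.comp (hz2 μ)
  have htwo : ((2 : ℕ∞) : WithTop ℕ∞) = ((1 : ℕ∞) : WithTop ℕ∞) + 1 := by norm_num
  have hdz1 : ∀ μ : Fin 4, ContDiff ℝ 1 (deriv (fun τ => z τ μ)) := by
    intro μ
    have h2 := hz2 μ
    rw [show (2 : WithTop ℕ∞) = 1 + 1 by norm_num] at h2
    exact (contDiff_succ_iff_deriv.mp h2).2.2
  have hdre1 : ∀ μ : Fin 4, ContDiff ℝ 1 (deriv (fun τ => (z τ μ).re)) := by
    intro μ
    have h2 := hre2 μ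
    rw [show (2 : WithTop ℕ∞) = 1 + 1 by norm_num] at h2
    exact (contDiff_succ_iff_deriv.mp h2).2.2
  have hdim1 : ∀ μ : Fin 4, ContDiff ℝ 1 (deriv (fun τ => (z τ μ).im)) := by
    intro μ
    have h2 := him2 μ
    rw [show (2 : WithTop ℕ∞) = 1 + 1 by norm_num] at h2
    exact (contDiff_succ_iff_deriv.mp h2).2.2
  -- splitting of derivatives into real and imaginary parts
  have hsplitderiv : ∀ (μ : Fin 4) (τ : ℝ), deriv (fun s => z s μ) τ =
      ((deriv (fun s => (z s μ).re) τ : ℝ) : ℂ) +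
        ((deriv (fun s => (z s μ).im) τ : ℝ) : ℂ) * Complex.I := by
    intro μ τ
    have h := (hzd μ τ).hasDerivAt
    have hre : HasDerivAt (fun s => (z s μ).re) ((deriv (fun s => z s μ) τ).re) τ :=
      Complex.reCLM.hasFDerivAt.comp_hasDerivAt τ h
    have him : HasDerivAt (fun s => (z s μ).im) ((deriv (fun s => z s μ) τ).im) τ :=
      Complex.imCLM.hasFDerivAt.comp_hasDerivAt τ h
    rw [hre.deriv, him.deriv, Complex.re_add_im]
  have hDzsplit : ∀ (α : Fin 4) (τ : ℝ), Dz g z α τ =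
      ((Dx g z α τ : ℝ) : ℂ) + ((Dt g z α τ : ℝ) : ℂ) * Complex.I := by
    intro α τ
    unfold Dz Dx Dt
    rw [hsplitderiv α τ]
    push_cast
    ring
  -- the energy function and differentiability of the speed
  set E : ℝ → ℝ := fun τ =>
    (∑ α, ∑ β, g (z τ) α β * deriv (fun s => z s α) τ *
      (starRingEnd ℂ) (deriv (fun s => z s β) τ)).re with hEdef
  have hLE : ∀ τ, curveL g z τ = Real.sqrt (E τ) := fun τ => rfl
  have hEpos : ∀ τ, 0 < E τ := fun τ => Real.sqrt_pos.mp (by rw [← hLE]; exact hL τ)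
  have hEdiff : Differentiable ℝ E := by
    have hS : Differentiable ℝ (fun τ => ∑ α, ∑ β, g (z τ) α β * deriv (fun s => z s α) τ *
        (starRingEnd ℂ) (deriv (fun s => z s β) τ)) := by
      apply Differentiable.fun_sum
      intro α _
      apply Differentiable.fun_sum
      intro β _
      have h1 : Differentiable ℝ (fun τ => g (z τ) α β) :=
        ((hg α β).differentiable one_ne_zero).comp (hz.differentiable (by norm_num))
      have h2 : Differentiable ℝ (deriv (fun s => z s α)) := (hdz1 α).differentiable one_ne_zero
      have h3 : Differentiable ℝ (fun τ => (starRingEnd ℂ) (deriv (fun s => z s β) τ)) :=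
        Complex.conjCLE.differentiable.comp ((hdz1 β).differentiable one_ne_zero)
      exact (h1.mul h2).mul h3
    exact Complex.reCLM.differentiable.comp hS
  have hLdiffAt : ∀ τ, DifferentiableAt ℝ (curveL g z) τ := by
    intro τ
    have h1 : DifferentiableAt ℝ (fun τ => Real.sqrt (E τ)) τ :=
      ((Real.hasDerivAt_sqrt (ne_of_gt (hEpos τ))).comp τ (hEdiff τ).hasDerivAt).differentiableAt
    have hfun : curveL g z = fun τ => Real.sqrt (E τ) := rfl
    rw [hfun]
    exact h1
  have hLne : ∀ τ, curveL g z τ ≠ 0 := fun τ => ne_of_gt (hL τ)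
  -- splitting of D2z
  have hD2split : ∀ μ : Fin 4, D2z g z μ σ =
      ((D2x g z μ σ : ℝ) : ℂ) + ((D2t g z μ σ : ℝ) : ℂ) * Complex.I := by
    intro μ
    have hfd : DifferentiableAt ℝ
        (fun τ => (curveL g z τ)⁻¹ * deriv (fun s => (z s μ).re) τ) σ :=
      ((hLdiffAt σ).inv (hLne σ)).mul ((hdre1 μ).differentiable one_ne_zero σ)
    have hhd : DifferentiableAt ℝ
        (fun τ => (curveL g z τ)⁻¹ * deriv (fun s => (z s μ).im) τ) σ :=
      ((hLdiffAt σ).inv (hLne σ)).mul ((hdim1 μ).differentiable one_ne_zero σ)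
    have hGfun : (fun τ => ((curveL g z τ : ℝ) : ℂ)⁻¹ * deriv (fun s => z s μ) τ)
        = fun τ => (((curveL g z τ)⁻¹ * deriv (fun s => (z s μ).re) τ : ℝ) : ℂ) +
            (((curveL g z τ)⁻¹ * deriv (fun s => (z s μ).im) τ : ℝ) : ℂ) * Complex.I := by
      funext τ
      rw [hsplitderiv μ τ]
      push_cast
      ring
    have h1 : HasDerivAt
        (fun τ => (((curveL g z τ)⁻¹ * deriv (fun s => (z s μ).re) τ : ℝ) : ℂ))
        ((deriv (fun τ => (curveL g z τ)⁻¹ * deriv (fun s => (z s μ).re) τ) σ : ℝ) : ℂ) σ :=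
      hfd.hasDerivAt.ofReal_comp
    have h2 : HasDerivAt
        (fun τ => (((curveL g z τ)⁻¹ * deriv (fun s => (z s μ).im) τ : ℝ) : ℂ) * Complex.I)
        (((deriv (fun τ => (curveL g z τ)⁻¹ * deriv (fun s => (z s μ).im) τ) σ : ℝ) : ℂ) *
          Complex.I) σ :=
      (hhd.hasDerivAt.ofReal_comp).mul_const Complex.I
    have hG : deriv (fun τ => ((curveL g z τ : ℝ) : ℂ)⁻¹ * deriv (fun s => z s μ) τ) σ =
        ((deriv (fun τ => (curveL g z τ)⁻¹ * deriv (fun s => (z s μ).re) τ) σ : ℝ) : ℂ) +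
          ((deriv (fun τ => (curveL g z τ)⁻¹ * deriv (fun s => (z s μ).im) τ) σ : ℝ) : ℂ) *
            Complex.I := by
      rw [hGfun]
      exact (h1.add h2).deriv
    unfold D2z D2x D2t
    rw [hG]
    push_cast
    ring
  -- values of Dz along the curve
  have hDz0 : Dz g z 0 σ = Complex.I := by
    rw [hDzsplit 0 σ, hDx1 σ, hDt1 σ]; simp
  have hDzv : ∀ b : Fin 4, b ≠ 0 → Dz g z b σ = ((Dx g z b σ : ℝ) : ℂ) := by
    intro b hb
    rw [hDzsplit b σ, hDt b hb σ]; simp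
  -- hermitian relations and reality of g on the curve
  have hHB : ∀ b : Fin 4, dX γ (gF g b 0) (z σ) = (starRingEnd ℂ) (dX γ (gF g 0 b) (z σ)) :=
    fun b => dX_conj hg hherm γ b 0 (z σ)
  have hG0 : ∀ i j : Fin 4, (starRingEnd ℂ) (g (z σ) i j) = g (z σ) i j := fun i j =>
    Complex.conj_eq_iff_im.mpr (hGI σ i j)
  have hGRv : ∀ i j : Fin 4, gR g i j (z σ) = g (z σ) i j := by
    intro i j
    simp only [gR]
    conv_rhs => rw [← Complex.re_add_im (g (z σ) i j)]
    rw [hGI σ i j]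
    simp
  -- prepare the geodesic equation
  have H := hgeo γ σ
  have ht1 := ht 1 (by decide)
  have ht2 := ht 2 (by decide)
  have ht3 := ht 3 (by decide)
  have htγ := ht γ hγ
  simp only [Fin.sum_univ_four, dW, dWbar, hx1, ht1, ht2, ht3, htγ, hDz0,
    hDzv 1 (by decide), hDzv 2 (by decide), hDzv 3 (by decide), hD2split,
    Complex.conj_I, Complex.conj_ofReal] at H
  rw [hHB 1, hHB 2, hHB 3] at H
  have Hc := congrArg (starRingEnd ℂ) H
  simp only [map_add, map_sub, map_mul, map_div₀, map_neg, map_ofNat, map_zero, map_one,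
    Complex.conj_I, Complex.conj_ofReal, Complex.conj_conj, hG0] at Hc
  -- prepare the goal
  have hXR : ∀ k i j : Fin 4, dX k (gR g i j) (z σ) = (((dX k (gF g i j) (z σ)).re : ℝ) : ℂ) :=
    fun k i j => dX_gR hg k i j (z σ)
  have hXI : ∀ k i j : Fin 4, dX k (gI g i j) (z σ) = (((dX k (gF g i j) (z σ)).im : ℝ) : ℂ) :=
    fun k i j => dX_gI hg k i j (z σ)
  have hTR : ∀ k i j : Fin 4, dT k (gR g i j) (z σ) = (((dT k (gF g i j) (z σ)).re : ℝ) : ℂ) :=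
    fun k i j => dT_gR hg k i j (z σ)
  have hTI : ∀ k i j : Fin 4, dT k (gI g i j) (z σ) = (((dT k (gF g i j) (z σ)).im : ℝ) : ℂ) :=
    fun k i j => dT_gI hg k i j (z σ)
  have hre : ∀ c : ℂ, ((c.re : ℝ) : ℂ) = (c + (starRingEnd ℂ) c) / 2 := by
    intro c
    rw [Complex.add_conj]
    push_cast
    ring
  have him : ∀ c : ℂ, ((c.im : ℝ) : ℂ) = ((starRingEnd ℂ) c - c) * Complex.I / 2 := by
    intro c
    have h2 : (starRingEnd ℂ) c - c = -(((2 * c.im : ℝ) : ℂ) * Complex.I) := by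
      rw [← Complex.sub_conj]; ring
    rw [h2]
    push_cast
    linear_combination (c.im : ℂ) * Complex.I_mul_I
  simp only [Fin.sum_univ_four, PhiPP, PhiMM, Fx, hXR, hXI, hTR, hTI, hGRv, hDx1, hx1, htγ,
    Complex.zero_re, Complex.zero_im, Complex.ofReal_zero, mul_zero, zero_mul, sub_zero,
    zero_sub, add_zero, zero_add, neg_zero]
  simp only [hre, him]
  have hI2 : (Complex.I) ^ 2 = -1 := Complex.I_sq
  have hI3 : (Complex.I) ^ 3 = -Complex.I := by rw [pow_succ, hI2]; ring
  have hI4 : (Complex.I) ^ 4 = 1 := by rw [show (4:ℕ) = 2 + 2 from rfl, pow_add, hI2]; ring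
  ring_nf at H Hc
  simp only [hI2, hI3, hI4] at H Hc
  linear_combination (H + Hc) / 2
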